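/- Let X be an L-embedded Banach space, X** = X ⊕₁ Z. If the unit ball B_X of X has no extreme points, then the unit ball of Z is weak*-dense in the unit ball of X**. -/

import Mathlib

open Filter Metric NormedSpace

section aux

variable {X : Type*} [NormedAddCommGroup X] [NormedSpace ℝ X]

/-- The canonical embedding into the double dual is injective given the norm identity. -/
theorem auxJ_inj
    (hnorm : ∀ (x : X), ‖inclusionInDoubleDual ℝ X x‖ = ‖x‖) :
    Function.Injective (inclusionInDoubleDual ℝ X) := by
  intro a b hab
  have : ‖inclusionInDoubleDual ℝ X (a - b)‖ = ‖a - b‖ := hnorm _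
  rw [map_sub, hab, sub_self, norm_zero (E := StrongDual ℝ (StrongDual ℝ X))] at this
  exact sub_eq_zero.mp (norm_eq_zero.mp this.symm)

/-- Every extreme point of the unit ball of `X**` lies in `Z` (given that `B_X` has
no extreme points). -/
theorem aux_extreme
    (Z : Submodule ℝ (StrongDual ℝ (StrongDual ℝ X)))
    (hdec : ∀ F : StrongDual ℝ (StrongDual ℝ X), ∃! p : X × Z,
      F = inclusionInDoubleDual ℝ X p.1 + (p.2 : StrongDual ℝ (StrongDual ℝ X)))
    (hnorm : ∀ (x : X) (z : Z),
      ‖inclusionInDoubleDual ℝ X x + (z : StrongDual ℝ (StrongDual ℝ X))‖ = ‖x‖ + ‖(z : StrongDual ℝ (StrongDual ℝ X))‖)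
    (hext : Set.extremePoints ℝ (closedBall (0 : X) 1) = ∅) :
    ∀ F₀ ∈ (closedBall (0 : StrongDual ℝ (StrongDual ℝ X)) 1).extremePoints ℝ, F₀ ∈ Z := by
  have hJnorm : ∀ x : X, ‖inclusionInDoubleDual ℝ X x‖ = ‖x‖ := by
    intro x
    have := hnorm x 0
    simpa [norm_zero (E := StrongDual ℝ (StrongDual ℝ X))] using this
  have hJinj : Function.Injective (inclusionInDoubleDual ℝ X) := auxJ_inj hJnorm
  rintro F₀ hF₀
  obtain ⟨hF₀mem, hF₀ext⟩ := mem_extremePoints.mp hF₀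
  rw [mem_closedBall_zero_iff (E := StrongDual ℝ (StrongDual ℝ X))] at hF₀mem
  obtain ⟨⟨x, z⟩, hxz, huniq⟩ := hdec F₀
  simp only at hxz
  by_cases hx : x = 0
  · rw [hxz, hx]
    simpa using z.2
  · exfalso
    by_cases hz : (z : StrongDual ℝ (StrongDual ℝ X)) = 0
    · -- F₀ = J x, so x would be an extreme point of the unit ball of X
      have hFx : F₀ = inclusionInDoubleDual ℝ X x := by rw [hxz, hz, add_zero]
      have hxmem : x ∈ closedBall (0 : X) 1 := by
        rw [mem_closedBall_zero_iff, ← hJnorm, ← hFx]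
        exact hF₀mem
      have : x ∈ Set.extremePoints ℝ (closedBall (0 : X) 1) := by
        refine ⟨hxmem, fun a ha b hb hab => ?_⟩
        obtain ⟨ta, tb, hta, htb, htab, hsum⟩ := hab
        have hmemF : F₀ ∈ openSegment ℝ
            (inclusionInDoubleDual ℝ X a) (inclusionInDoubleDual ℝ X b) := by
          refine ⟨ta, tb, hta, htb, htab, ?_⟩
          rw [← map_smul, ← map_smul, ← map_add, hsum, hFx]
        have haB : inclusionInDoubleDual ℝ X a ∈ closedBall (0 : StrongDual ℝ (StrongDual ℝ X)) 1 := by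
          rw [mem_closedBall_zero_iff (E := StrongDual ℝ (StrongDual ℝ X)), hJnorm]
          rwa [mem_closedBall_zero_iff] at ha
        have hbB : inclusionInDoubleDual ℝ X b ∈ closedBall (0 : StrongDual ℝ (StrongDual ℝ X)) 1 := by
          rw [mem_closedBall_zero_iff (E := StrongDual ℝ (StrongDual ℝ X)), hJnorm]
          rwa [mem_closedBall_zero_iff] at hb
        obtain ⟨hag, hbg⟩ := hF₀ext _ haB _ hbB hmemF
        rw [hFx] at hag hbg
        exact hJinj hag
      rw [hext] at this
      exact this
    · -- both components nonzero: F₀ is a proper convex combination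
      have ha0 : (0 : ℝ) < ‖x‖ := norm_pos_iff.mpr hx
      have hb0 : (0 : ℝ) < ‖(z : StrongDual ℝ (StrongDual ℝ X))‖ :=
        lt_of_le_of_ne (norm_nonneg (z : StrongDual ℝ (StrongDual ℝ X))) (fun h => hz ((norm_eq_zero (E := StrongDual ℝ (StrongDual ℝ X))).mp h.symm))
      have hab0 : (0 : ℝ) < ‖x‖ + ‖(z : StrongDual ℝ (StrongDual ℝ X))‖ := by linarith
      have hab1 : ‖x‖ + ‖(z : StrongDual ℝ (StrongDual ℝ X))‖ ≤ 1 := by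
        rw [← hnorm x z, ← hxz]; exact hF₀mem
      set A : StrongDual ℝ (StrongDual ℝ X) :=
        ((‖x‖ + ‖(z : StrongDual ℝ (StrongDual ℝ X))‖) / ‖x‖) • (inclusionInDoubleDual ℝ X x) with hA
      set B : StrongDual ℝ (StrongDual ℝ X) :=
        ((‖x‖ + ‖(z : StrongDual ℝ (StrongDual ℝ X))‖) / ‖(z : StrongDual ℝ (StrongDual ℝ X))‖) •
          (z : StrongDual ℝ (StrongDual ℝ X)) with hB
      haveI hNS : NormSMulClass ℝ (StrongDual ℝ (StrongDual ℝ X)) := by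
        have h := NormedSpace.toNormSMulClass (𝕜 := ℝ) (E := StrongDual ℝ (StrongDual ℝ X))
        exact h
      have hAnorm : ‖A‖ ≤ 1 := by
        rw [hA, norm_smul, hJnorm, Real.norm_eq_abs, abs_of_pos (by positivity),
          div_mul_cancel₀ _ (ne_of_gt ha0)]
        exact hab1
      have hBnorm : ‖B‖ ≤ 1 := by
        rw [hB, norm_smul, Real.norm_eq_abs, abs_of_pos (by positivity),
          div_mul_cancel₀ _ (ne_of_gt hb0)]
        exact hab1
      have hmemF : F₀ ∈ openSegment ℝ A B := by
        refine ⟨‖x‖ / (‖x‖ + ‖(z : StrongDual ℝ (StrongDual ℝ X))‖),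
          ‖(z : StrongDual ℝ (StrongDual ℝ X))‖ / (‖x‖ + ‖(z : StrongDual ℝ (StrongDual ℝ X))‖),
          by positivity, by positivity, ?_, ?_⟩
        · field_simp
        · have c1 : ‖x‖ / (‖x‖ + ‖(z : StrongDual ℝ (StrongDual ℝ X))‖) *
              ((‖x‖ + ‖(z : StrongDual ℝ (StrongDual ℝ X))‖) / ‖x‖) = 1 := by
            field_simp
          have c2 : ‖(z : StrongDual ℝ (StrongDual ℝ X))‖ / (‖x‖ + ‖(z : StrongDual ℝ (StrongDual ℝ X))‖) *
              ((‖x‖ + ‖(z : StrongDual ℝ (StrongDual ℝ X))‖) / ‖(z : StrongDual ℝ (StrongDual ℝ X))‖) = 1 := by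
            field_simp
          rw [hA, hB, smul_smul, smul_smul, c1, c2, one_smul, one_smul]
          exact hxz.symm
      have hAB : A ∈ closedBall (0 : StrongDual ℝ (StrongDual ℝ X)) 1 := by
        rwa [mem_closedBall_zero_iff (E := StrongDual ℝ (StrongDual ℝ X))]
      have hBB : B ∈ closedBall (0 : StrongDual ℝ (StrongDual ℝ X)) 1 := by
        rwa [mem_closedBall_zero_iff (E := StrongDual ℝ (StrongDual ℝ X))]
      obtain ⟨hag, -⟩ := hF₀ext _ hAB _ hBB hmemF
      -- A = F₀ : two decompositions of F₀, contradiction with uniqueness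
      have hdec1 : F₀ = inclusionInDoubleDual ℝ X
          (((‖x‖ + ‖(z : StrongDual ℝ (StrongDual ℝ X))‖) / ‖x‖) • x) + ((0 : Z) : StrongDual ℝ (StrongDual ℝ X)) := by
        rw [← hag, hA, map_smul]
        simp
      have h1 := huniq (((‖x‖ + ‖(z : StrongDual ℝ (StrongDual ℝ X))‖) / ‖x‖) • x, (0 : Z)) hdec1
      have h2 := huniq (x, z) hxz
      have h3 : (0 : Z) = z := congrArg Prod.snd (h1.trans h2.symm)
      rw [← h3] at hz
      exact hz (by simp)

end aux

theorem stmt3 {X : Type*} [NormedAddCommGroup X] [NormedSpace ℝ X] [CompleteSpace X]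
    (Z : Submodule ℝ (StrongDual ℝ (StrongDual ℝ X))) (hZc : IsClosed (Z : Set (StrongDual ℝ (StrongDual ℝ X))))
    (hdec : ∀ F : StrongDual ℝ (StrongDual ℝ X), ∃! p : X × Z,
      F = inclusionInDoubleDual ℝ X p.1 + (p.2 : StrongDual ℝ (StrongDual ℝ X)))
    (hnorm : ∀ (x : X) (z : Z),
      ‖inclusionInDoubleDual ℝ X x + (z : StrongDual ℝ (StrongDual ℝ X))‖ = ‖x‖ + ‖(z : StrongDual ℝ (StrongDual ℝ X))‖)
    (hext : Set.extremePoints ℝ (closedBall (0 : X) 1) = ∅) :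
    -- the unit ball of `Z` is weak*-dense in the unit ball of `X**`
    ∀ F : StrongDual ℝ (StrongDual ℝ X), ‖F‖ ≤ 1 → ∀ s : Finset (StrongDual ℝ X), ∀ ε : ℝ, 0 < ε →
      ∃ z ∈ Z, ‖z‖ ≤ 1 ∧ ∀ f ∈ s, |z f - F f| < ε := by
  intro F hF s ε hε
  haveI : LocallyConvexSpace ℝ (WeakDual ℝ (StrongDual ℝ X)) :=
    by have h := WeakBilin.locallyConvexSpace (𝕜 := ℝ) (E := StrongDual ℝ (StrongDual ℝ X)) (F := StrongDual ℝ X) (B := topDualPairing ℝ (StrongDual ℝ X)); exact h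
  -- the closed unit ball in the weak-* topology
  set K : Set (WeakDual ℝ (StrongDual ℝ X)) :=
    StrongDual.toWeakDual '' closedBall (0 : StrongDual ℝ (StrongDual ℝ X)) 1 with hK
  have hKeq : K = (WeakDual.toStrongDual (𝕜 := ℝ) (E := StrongDual ℝ X)).toLinearMap ⁻¹'
      closedBall 0 1 := by
    ext G
    constructor
    · rintro ⟨F₀, hF₀, rfl⟩
      exact hF₀
    · intro hG
      exact ⟨WeakDual.toStrongDual G, hG, rfl⟩
  have hKc : IsCompact K := by
    rw [hKeq]; exact WeakDual.isCompact_closedBall (0 : StrongDual ℝ (StrongDual ℝ X)) 1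
  have hKconv : Convex ℝ K :=
    (convex_closedBall (0 : StrongDual ℝ (StrongDual ℝ X)) 1).linear_image
      (StrongDual.toWeakDual (𝕜 := ℝ) (E := StrongDual ℝ X)).toLinearMap
  -- the candidate set: unit ball of Z (viewed in the weak dual)
  set S : Set (WeakDual ℝ (StrongDual ℝ X)) :=
    {G | (WeakDual.toStrongDual G : StrongDual ℝ (StrongDual ℝ X)) ∈ Z ∧
      ‖(WeakDual.toStrongDual G : StrongDual ℝ (StrongDual ℝ X))‖ ≤ 1} with hS
  have hSconv : Convex ℝ S := by
    have : S = (WeakDual.toStrongDual (𝕜 := ℝ) (E := StrongDual ℝ X)).toLinearMap ⁻¹'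
        ((Z : Set (StrongDual ℝ (StrongDual ℝ X))) ∩ closedBall 0 1) := by
      ext G
      simp [hS, Set.mem_inter_iff, mem_closedBall_zero_iff (E := StrongDual ℝ (StrongDual ℝ X))]
    rw [this]
    exact ((Z.convex).inter (convex_closedBall (0 : StrongDual ℝ (StrongDual ℝ X)) 1)).linear_preimage _
  -- extreme points of K lie in S
  have hextK : K.extremePoints ℝ ⊆ S := by
    rw [hK, ← image_extremePoints (𝕜 := ℝ) (E := StrongDual ℝ (StrongDual ℝ X)) (F := WeakDual ℝ (StrongDual ℝ X)) (StrongDual.toWeakDual (𝕜 := ℝ) (E := StrongDual ℝ X))]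
    rintro G ⟨F₀, hF₀, rfl⟩
    refine ⟨aux_extreme Z hdec hnorm hext F₀ hF₀, ?_⟩
    have := extremePoints_subset hF₀
    rwa [mem_closedBall_zero_iff (E := StrongDual ℝ (StrongDual ℝ X))] at this
  -- Krein-Milman: K is the closure of the convex hull of its extreme points
  have hKM : closure (convexHull ℝ (K.extremePoints ℝ)) = K :=
    closure_convexHull_extremePoints (E := WeakDual ℝ (StrongDual ℝ X)) hKc hKconv
  have hKsub : K ⊆ closure S := by
    rw [← hKM]
    exact closure_mono (convexHull_min hextK hSconv)
  -- F is in K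
  have hFK : StrongDual.toWeakDual F ∈ K := by
    refine ⟨F, ?_, rfl⟩
    rwa [mem_closedBall_zero_iff (E := StrongDual ℝ (StrongDual ℝ X))]
  -- the neighborhood
  set U : Set (WeakDual ℝ (StrongDual ℝ X)) := ⋂ f ∈ s, {G | |G f - F f| < ε} with hU
  have hUopen : IsOpen U := by
    refine isOpen_biInter_finset fun f hf => ?_
    have hcont : Continuous fun G : WeakDual ℝ (StrongDual ℝ X) => |G f - F f| :=
      ((WeakDual.eval_continuous f).sub continuous_const).abs
    exact isOpen_lt hcont continuous_const
  have hFU : StrongDual.toWeakDual F ∈ U := by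
    simp only [hU, Set.mem_iInter, Set.mem_setOf_eq]
    intro f hf
    show |F f - F f| < ε
    simpa using hε
  obtain ⟨G, hGU, hGS⟩ := _root_.mem_closure_iff.mp (hKsub hFK) U hUopen hFU
  refine ⟨WeakDual.toStrongDual G, hGS.1, hGS.2, fun f hf => ?_⟩
  exact Set.mem_iInter₂.mp hGU f hf
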